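/- Let f : D → Im ℍ be a smooth conformal immersion, i.e., f_u² = f_v² = -e^{2h} and f_u f_v = -f_v f_u for a smooth real function h. If additionally f_{uv} ∈ span{f_u, f_v} (f is isothermic), then the quaternion-valued 1-form df* := -(f_u)⁻¹ du + (f_v)⁻¹ dv is closed, i.e., -∂_v (f_u)⁻¹ = ∂_u (f_v)⁻¹. -/

import Mathlib

/-- Let `f : D → Im ℍ` be a smooth conformal immersion, i.e.
`f_u² = f_v² = -e^{2h}` and `f_u f_v = -f_v f_u`. If moreover
`f_{uv} ∈ span{f_u, f_v}` (i.e. `f` is isothermic), then the quaternionic 1-form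
`df* = -(f_u)⁻¹ du + (f_v)⁻¹ dv` is closed: `-∂_v (f_u)⁻¹ = ∂_u (f_v)⁻¹`. -/
theorem stmt5 (h : ℝ → ℝ → ℝ) (f fu fv fuv : ℝ → ℝ → Quaternion ℝ)
    (α β : ℝ → ℝ → ℝ)
    (hIm : ∀ u v, (f u v).re = 0)
    (hfu : ∀ u v, HasDerivAt (fun x => f x v) (fu u v) u)
    (hfv : ∀ u v, HasDerivAt (fun y => f u y) (fv u v) v)
    (hfuv : ∀ u v, HasDerivAt (fun y => fu u y) (fuv u v) v)
    (hfvu : ∀ u v, HasDerivAt (fun x => fv x v) (fuv u v) u)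
    (hconf1 : ∀ u v, (fu u v) ^ 2 = -((Real.exp (2 * h u v) : ℝ) : Quaternion ℝ))
    (hconf2 : ∀ u v, (fv u v) ^ 2 = -((Real.exp (2 * h u v) : ℝ) : Quaternion ℝ))
    (hconf3 : ∀ u v, fu u v * fv u v = -(fv u v * fu u v))
    (hiso : ∀ u v, fuv u v = α u v • fu u v + β u v • fv u v) :
    ∀ u v, deriv (fun y => -(fu u y)⁻¹) v = deriv (fun x => (fv x v)⁻¹) u := by
  intro u v
  set a := fu u v with ha_def
  set b := fv u v with hb_def
  set c := fuv u v with hc_def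
  set E := Real.exp (2 * h u v) with hE_def
  have hEpos : (0:ℝ) < E := Real.exp_pos _
  have ha2 : a * a = -((E:ℝ) : Quaternion ℝ) := by rw [← sq]; exact hconf1 u v
  have hb2 : b * b = -((E:ℝ) : Quaternion ℝ) := by rw [← sq]; exact hconf2 u v
  have hane : a ≠ 0 := by
    intro h0
    have := congrArg QuaternionAlgebra.re ha2
    rw [h0] at this
    simp [Quaternion.re_zero] at this
    exact absurd this hEpos.ne'
  have hbne : b ≠ 0 := by
    intro h0
    have := congrArg QuaternionAlgebra.re hb2
    rw [h0] at this
    simp [Quaternion.re_zero] at this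
    exact absurd this hEpos.ne'
  -- inverses as scalar multiples
  have hainv : a⁻¹ = (-(E⁻¹)) • a := by
    apply inv_eq_of_mul_eq_one_right
    rw [mul_smul_comm, ha2, neg_smul, smul_neg, neg_neg, Quaternion.smul_coe,
      inv_mul_cancel₀ hEpos.ne', Quaternion.coe_one]
  have hbinv : b⁻¹ = (-(E⁻¹)) • b := by
    apply inv_eq_of_mul_eq_one_right
    rw [mul_smul_comm, hb2, neg_smul, smul_neg, neg_neg, Quaternion.smul_coe,
      inv_mul_cancel₀ hEpos.ne', Quaternion.coe_one]
  -- the key algebraic identity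
  have key : a * c * a = -(b * c * b) := by
    have hab : a * b = -(b * a) := hconf3 u v
    have hba : b * a = -(a * b) := by rw [hab, neg_neg]
    rw [hc_def, hiso u v, ← ha_def, ← hb_def]
    rw [mul_add, add_mul, mul_smul_comm, mul_smul_comm, smul_mul_assoc, smul_mul_assoc]
    rw [mul_add, add_mul, mul_smul_comm, mul_smul_comm, smul_mul_assoc, smul_mul_assoc]
    have e1 : a * a * a = -(((E:ℝ):Quaternion ℝ) * a) := by rw [ha2, neg_mul]
    have e2 : a * b * a = b * ((E:ℝ):Quaternion ℝ) := by
      rw [hab, neg_mul, mul_assoc, ha2, mul_neg, neg_neg]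
    have e3 : b * a * b = a * ((E:ℝ):Quaternion ℝ) := by
      rw [hba, neg_mul, mul_assoc, hb2, mul_neg, neg_neg]
    have e4 : b * b * b = -(((E:ℝ):Quaternion ℝ) * b) := by rw [hb2, neg_mul]
    rw [e1, e2, e3, e4, Quaternion.coe_commutes]
    rw [show (b:Quaternion ℝ) * ((E:ℝ):Quaternion ℝ) = ((E:ℝ):Quaternion ℝ) * b from
      (Quaternion.coe_commutes _ _).symm]
    module
  -- derivatives
  have hda : HasDerivAt (fun y => (fu u y)⁻¹) (-(a⁻¹ * c * a⁻¹)) v := by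
    have := (hasFDerivAt_inv' (𝕜 := ℝ) hane).comp_hasDerivAt v (hfuv u v)
    simpa [Function.comp_def] using this
  have hdb : HasDerivAt (fun x => (fv x v)⁻¹) (-(b⁻¹ * c * b⁻¹)) u := by
    have := (hasFDerivAt_inv' (𝕜 := ℝ) hbne).comp_hasDerivAt u (hfvu u v)
    simpa [Function.comp_def] using this
  rw [show (fun y => -(fu u y)⁻¹) = -(fun y => (fu u y)⁻¹) from rfl, hda.neg.deriv, hdb.deriv, neg_neg]
  rw [hainv, hbinv]
  rw [smul_mul_assoc, mul_smul_comm, smul_mul_assoc, smul_mul_assoc, mul_smul_comm,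
    smul_mul_assoc, key]
  module
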